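/- The minimal DFAO computing the 2^n-fold running sum (mod 2) of the Thue-Morse sequence, reading base-2 representations most significant digit first, has exactly 2^{n+3} states, for every n ≥ 0. -/

import Mathlib

/-- The Thue–Morse sequence: parity of the number of 1s in the binary representation. -/
def t (k : ℕ) : ℕ := (Nat.digits 2 k).sum % 2

/-- `ts m` is the m-fold iterated running sum (mod 2) of the Thue–Morse sequence. -/
def ts : ℕ → ℕ → ℕ
  | 0, k => t k
  | m + 1, k => (∑ j ∈ Finset.range (k + 1), ts m j) % 2

/-- The value of a binary string (msd-first). -/
def val (z : List Bool) : ℕ := z.foldl (fun a b => 2 * a + (if b then 1 else 0)) 0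

/-- The language of binary representations (with arbitrary leading zeros) of those `k`
with `ts (2^n) k = 1`. -/
def L (n : ℕ) : Set (List Bool) := {w | ts (2 ^ n) (val w) = 1}

/-- The Myhill–Nerode congruence of `L n`. -/
def mnRel (n : ℕ) (x y : List Bool) : Prop :=
  ∀ z : List Bool, (x ++ z ∈ L n ↔ y ++ z ∈ L n)

section ThueMorseAux
open Finset

lemma t_lt_two (k : ℕ) : t k < 2 := Nat.mod_lt _ (by norm_num)

lemma t_def (m : ℕ) : t m = (m % 2 + t (m / 2)) % 2 := by
  rcases Nat.eq_zero_or_pos m with h | h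
  · subst h; simp [t]
  · rw [t, Nat.digits_def' (by norm_num : (1:ℕ) < 2) h]
    simp [t, Nat.add_mod]

lemma t_zero : t 0 = 0 := by simp [t]
lemma t_one : t 1 = 1 := by simp [t]

lemma t_two_mul (k : ℕ) : t (2 * k) = t k := by
  rw [t_def (2 * k)]
  simp [Nat.mul_div_cancel_left, Nat.mul_mod_right, Nat.mod_mod_of_dvd, t_lt_two,
    Nat.mod_eq_of_lt (t_lt_two k)]

lemma t_two_mul_add_one (k : ℕ) : t (2 * k + 1) = (t k + 1) % 2 := by
  rw [t_def (2 * k + 1)]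
  have : (2 * k + 1) / 2 = k := by omega
  rw [this]; omega

lemma t_add (j : ℕ) : ∀ a r : ℕ, r < 2 ^ j → t (a * 2 ^ j + r) = (t a + t r) % 2 := by
  induction j with
  | zero => intro a r hr
            interval_cases r
            simp [t_zero, Nat.mod_eq_of_lt (t_lt_two a)]
  | succ j ih =>
    intro a r hr
    have hA : a * 2 ^ (j+1) = 2 * (a * 2 ^ j) := by ring
    have h1 : (a * 2 ^ (j+1) + r) % 2 = r % 2 := by rw [hA]; omega
    have h2 : (a * 2 ^ (j+1) + r) / 2 = a * 2 ^ j + r / 2 := by rw [hA]; omega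
    rw [t_def (a * 2 ^ (j+1) + r), h1, h2, ih a (r/2) (by rw [pow_succ] at hr; omega),
      t_def r]
    have := t_lt_two a; have := t_lt_two (r/2)
    omega

lemma t_mul_pow (m L : ℕ) : t (m * 2 ^ L) = t m := by
  rw [show m * 2 ^ L = m * 2 ^ L + 0 by ring, t_add L m 0 (by positivity), t_zero,
    Nat.add_zero, Nat.mod_eq_of_lt (t_lt_two m)]

lemma t_split (v m : ℕ) : t v = (t (v / 2 ^ m) + t (v % 2 ^ m)) % 2 := by
  conv_lhs => rw [← Nat.div_add_mod' v (2 ^ m)]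
  exact t_add m _ _ (Nat.mod_lt _ (by positivity))

def S (k : ℕ) : ℕ := (∑ j ∈ Finset.range (k + 1), t j) % 2

lemma S_def (k : ℕ) : S k = (∑ j ∈ Finset.range (k + 1), t j) % 2 := rfl

lemma S_lt_two (k : ℕ) : S k < 2 := Nat.mod_lt _ (by norm_num)

lemma sum_range_two_mul (N : ℕ) : (∑ j ∈ range (2 * N), t j) % 2 = N % 2 := by
  induction N with
  | zero => simp
  | succ N ih =>
    have h : 2 * (N + 1) = 2 * N + 1 + 1 := by ring
    rw [h, sum_range_succ, sum_range_succ, t_two_mul, t_two_mul_add_one]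
    have := t_lt_two N
    omega

lemma S_odd (a : ℕ) : S (2 * a + 1) = (a + 1) % 2 := by
  have h : 2 * a + 1 + 1 = 2 * (a + 1) := by ring
  rw [S, h, sum_range_two_mul]

lemma S_even (a : ℕ) : S (2 * a) = (a + t a) % 2 := by
  have h : S (2 * a + 1) = (S (2 * a) + t (2 * a + 1)) % 2 := by
    rw [S, S, sum_range_succ]; omega
  rw [S_odd] at h
  rw [t_two_mul_add_one] at h
  have h1 := t_lt_two a
  have h2 := S_lt_two (2 * a)
  omega

lemma S_four_mul (v : ℕ) : S (4 * v) = t v := by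
  rw [show 4 * v = 2 * (2 * v) by ring, S_even, t_two_mul]
  have := t_lt_two v; omega

lemma S_eq_of (Q Q' : ℕ) (h4 : Q % 4 = Q' % 4) (ht : t Q = t Q') : S Q = S Q' := by
  have hd : Q / 2 % 2 = Q' / 2 % 2 := by omega
  by_cases h : Q % 2 = 0
  · have hQ : Q = 2 * (Q / 2) := by omega
    have hQ' : Q' = 2 * (Q' / 2) := by omega
    have hteq : t (Q / 2) = t (Q' / 2) := by
      rw [← t_two_mul (Q / 2), ← t_two_mul (Q' / 2), ← hQ, ← hQ', ht]
    rw [hQ, hQ', S_even, S_even, hteq]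
    omega
  · have hQ : Q = 2 * (Q / 2) + 1 := by omega
    have hQ' : Q' = 2 * (Q' / 2) + 1 := by omega
    rw [hQ, hQ', S_odd, S_odd]
    omega

lemma ts_lt_two (m k : ℕ) : ts m k < 2 := by
  cases m with
  | zero => exact t_lt_two k
  | succ m => exact Nat.mod_lt _ (by norm_num)

/-- running sum operator over ZMod 2 -/
def RS (a : ℕ → ZMod 2) : ℕ → ZMod 2 := fun k => ∑ j ∈ range (k + 1), a j

lemma ts_cast (m k : ℕ) : ((ts m k : ℕ) : ZMod 2) = RS^[m] (fun j => ((t j : ℕ) : ZMod 2)) k := by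
  induction m generalizing k with
  | zero => simp [ts]
  | succ m ih =>
    rw [Function.iterate_succ_apply']
    show (((∑ j ∈ range (k + 1), ts m j) % 2 : ℕ) : ZMod 2) = _
    rw [ZMod.natCast_mod, Nat.cast_sum]
    simp only [RS, ih]

lemma triangle (f : ℕ → ZMod 2) (N : ℕ) :
    ∑ i ∈ range N, ∑ j ∈ range (N - i), f (i + j) = ∑ p ∈ range N, (p + 1) • f p := by
  induction N with
  | zero => simp
  | succ N ih =>
    have hsplit : ∀ i ∈ range (N + 1),
        ∑ j ∈ range (N + 1 - i), f (i + j) = (∑ j ∈ range (N - i), f (i + j)) + f N := by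
      intro i hi
      rw [mem_range] at hi
      rw [show N + 1 - i = (N - i) + 1 by omega, sum_range_succ, show i + (N - i) = N by omega]
    have hlast : ∑ i ∈ range (N + 1), ∑ j ∈ range (N - i), f (i + j)
        = ∑ i ∈ range N, ∑ j ∈ range (N - i), f (i + j) := by
      rw [sum_range_succ]; simp
    rw [sum_congr rfl hsplit, sum_add_distrib, sum_const, card_range, hlast, ih,
      sum_range_succ]

lemma coeff (h : ℕ → ZMod 2) (N : ℕ) :
    ∑ p ∈ range N, (p + 1) • h p = ∑ q ∈ range ((N + 1) / 2), h (2 * q) := by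
  induction N with
  | zero => simp
  | succ N ih =>
    rw [sum_range_succ, ih]
    by_cases hN : N % 2 = 0
    · have h1 : (N + 1 + 1) / 2 = (N + 1) / 2 + 1 := by omega
      have h2 : 2 * ((N + 1) / 2) = N := by omega
      rw [h1, sum_range_succ, h2]
      congr 1
      have hc : ((N + 1 : ℕ) : ZMod 2) = 1 := by
        rw [← ZMod.natCast_mod, show (N + 1) % 2 = 1 by omega, Nat.cast_one]
      rw [← Nat.cast_smul_eq_nsmul (ZMod 2), hc, one_smul]
    · have h1 : (N + 1 + 1) / 2 = (N + 1) / 2 := by omega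
      have hc : ((N + 1 : ℕ) : ZMod 2) = 0 := by
        rw [← ZMod.natCast_mod, show (N + 1) % 2 = 0 by omega, Nat.cast_zero]
      rw [h1, ← Nat.cast_smul_eq_nsmul (ZMod 2), hc, zero_smul, add_zero]

lemma RS_pow (n : ℕ) : ∀ (a : ℕ → ZMod 2) (k : ℕ),
    RS^[2 ^ n] a k = ∑ i ∈ range (k / 2 ^ n + 1), a (k - 2 ^ n * i) := by
  induction n with
  | zero =>
    intro a k
    simp only [pow_zero, Function.iterate_one, Nat.div_one, RS]
    rw [← sum_range_reflect]
    refine sum_congr rfl fun i _ => ?_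
    congr 1; omega
  | succ n ih =>
    intro a k
    set Q := k / 2 ^ n with hQ
    have h2 : (2 : ℕ) ^ (n + 1) = 2 ^ n + 2 ^ n := by ring
    conv_lhs => rw [h2, Function.iterate_add_apply]
    rw [ih]
    have hinner : ∀ i ∈ range (Q + 1),
        RS^[2 ^ n] a (k - 2 ^ n * i) = ∑ j ∈ range (Q + 1 - i), a (k - 2 ^ n * (i + j)) := by
      intro i hi
      rw [mem_range] at hi
      have hle : 2 ^ n * i ≤ k :=
        le_trans (Nat.mul_le_mul_left (2 ^ n) (show i ≤ Q by omega)) (Nat.mul_div_le k (2 ^ n))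
      rw [ih, Nat.sub_mul_div k (2 ^ n) i, ← hQ]
      rw [show Q - i + 1 = Q + 1 - i by omega]
      refine sum_congr rfl fun j _ => ?_
      congr 1
      rw [Nat.mul_add]
      omega
    rw [sum_congr rfl hinner, triangle (fun p => a (k - 2 ^ n * p)) (Q + 1),
      coeff (fun p => a (k - 2 ^ n * p)) (Q + 1)]
    have hdiv : (Q + 1 + 1) / 2 = k / 2 ^ (n + 1) + 1 := by
      have : k / 2 ^ (n + 1) = Q / 2 := by
        rw [hQ, Nat.div_div_eq_div_mul, pow_succ]
      omega
    rw [hdiv]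
    refine sum_congr rfl fun q _ => ?_
    congr 1
    rw [show 2 ^ n * (2 * q) = 2 ^ (n + 1) * q by ring]

lemma nat_eq_of_cast2 (a b : ℕ) (ha : a < 2) (hb : b < 2) (h : (a : ZMod 2) = b) : a = b := by
  interval_cases a <;> interval_cases b <;> simp_all

lemma S_cast (k : ℕ) : ((S k : ℕ) : ZMod 2) = ∑ j ∈ range (k + 1), ((t j : ℕ) : ZMod 2) := by
  rw [S, ZMod.natCast_mod, Nat.cast_sum]

theorem ts_formula (n k : ℕ) :
    ts (2 ^ n) k = (S (k / 2 ^ n) + (k / 2 ^ n + 1) * t (k % 2 ^ n)) % 2 := by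
  set Q := k / 2 ^ n with hQ
  set R := k % 2 ^ n with hR
  have hRlt : R < 2 ^ n := Nat.mod_lt _ (by positivity)
  refine nat_eq_of_cast2 _ _ (ts_lt_two _ _) (Nat.mod_lt _ (by norm_num)) ?_
  rw [ts_cast, RS_pow, ZMod.natCast_mod]
  have hterm : ∀ i ∈ range (Q + 1),
      ((t (k - 2 ^ n * i) : ℕ) : ZMod 2) = ((t (Q - i) : ℕ) : ZMod 2) + ((t R : ℕ) : ZMod 2) := by
    intro i hi
    rw [mem_range] at hi
    have hk : Q * 2 ^ n + R = k := by
      rw [hQ, hR, mul_comm]; exact Nat.div_add_mod k (2 ^ n)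
    have e1 : (Q - i) * 2 ^ n = Q * 2 ^ n - i * 2 ^ n := Nat.sub_mul Q i (2 ^ n)
    have e2 : i * 2 ^ n ≤ Q * 2 ^ n := Nat.mul_le_mul_right _ (by omega)
    have hsub : k - 2 ^ n * i = (Q - i) * 2 ^ n + R := by
      rw [mul_comm (2 ^ n) i]
      omega
    rw [hsub, t_add n _ _ hRlt, ZMod.natCast_mod, Nat.cast_add]
  rw [sum_congr rfl hterm, sum_add_distrib, sum_const, card_range]
  have hrefl : ∑ i ∈ range (Q + 1), ((t (Q - i) : ℕ) : ZMod 2)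
      = ∑ j ∈ range (Q + 1), ((t j : ℕ) : ZMod 2) := by
    rw [← sum_range_reflect]
    refine sum_congr rfl fun i hi => ?_
    rw [mem_range] at hi
    congr 2
    omega
  rw [hrefl, ← S_cast, ← Nat.cast_smul_eq_nsmul (ZMod 2)]
  push_cast
  rw [smul_eq_mul]

lemma div_mod_helper (P Q R : ℕ) (hP : 0 < P) (hR : R < P) :
    (Q * P + R) / P = Q ∧ (Q * P + R) % P = R := by
  rw [add_comm]
  constructor
  · rw [Nat.add_mul_div_right _ _ hP, Nat.div_eq_of_lt hR, zero_add]
  · rw [Nat.add_mul_mod_self_right, Nat.mod_eq_of_lt hR]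

lemma pow_two_split (M : ℕ) (h : 1 ≤ M) : (2:ℕ) ^ M = 2 * 2 ^ (M - 1) := by
  conv_lhs => rw [show M = (M - 1) + 1 by omega]
  rw [pow_succ]; ring

lemma S_high (M v u : ℕ) (hM : 2 ≤ M) (hu : u < 2 ^ M) :
    S (v * 2 ^ M + u) = (S u + (u + 1) * t v) % 2 := by
  set A := v * 2 ^ M with hA
  have e0 : S (A + u) = ((∑ i ∈ Ico 0 A, t i) + ∑ i ∈ Ico A (A + (u + 1)), t i) % 2 := by
    rw [S_def, show A + u + 1 = A + (u + 1) by omega, range_eq_Ico,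
      ← sum_Ico_consecutive t (Nat.zero_le A) (Nat.le_add_right A (u + 1))]
  have e0b : ∑ i ∈ Ico A (A + (u + 1)), t i = ∑ i ∈ range (u + 1), t (A + i) := by
    rw [sum_Ico_eq_sum_range, Nat.add_sub_cancel_left]
  have e0c : ∑ i ∈ Ico 0 A, t i = ∑ i ∈ range A, t i := by rw [range_eq_Ico]
  rw [e0b, e0c] at e0
  have E1 := e0
  have E2 : (∑ j ∈ range A, t j) % 2 = 0 := by
    have hA2 : A = 2 * (v * 2 ^ (M - 1)) := by
      rw [hA, pow_two_split M (by omega)]; ring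
    rw [hA2, sum_range_two_mul]
    have : v * 2 ^ (M - 1) = (v * 2 ^ (M - 2)) * 2 := by
      rw [pow_two_split (M - 1) (by omega), show M - 1 - 1 = M - 2 by omega]; ring
    omega
  have E3 : (∑ i ∈ range (u + 1), t (A + i)) % 2 = ((u + 1) * t v + ∑ i ∈ range (u + 1), t i) % 2 := by
    have ht' : ∀ i ∈ range (u + 1), t (A + i) = (t v + t i) % 2 := fun i hi => by
      rw [mem_range] at hi
      exact t_add M v i (by omega)
    rw [sum_congr rfl ht', ← Finset.sum_nat_mod, sum_add_distrib, sum_const, card_range,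
      smul_eq_mul]
  have E4 : S u = (∑ i ∈ range (u + 1), t i) % 2 := S_def u
  omega

lemma ts_top (n v : ℕ) : ts (2 ^ n) (v * 2 ^ (n + 2)) = t v := by
  have hk : v * 2 ^ (n + 2) = (4 * v) * 2 ^ n + 0 := by rw [pow_add]; ring
  obtain ⟨hd, hm⟩ := div_mod_helper (2 ^ n) (4 * v) 0 (by positivity) (by positivity)
  rw [ts_formula, hk, hd, hm, t_zero, S_four_mul]
  have := t_lt_two v
  omega

lemma ts_ext (n v v' : ℕ) (hmod : v % 2 ^ (n + 2) = v' % 2 ^ (n + 2)) (ht : t v = t v')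
    (L w : ℕ) (hw : w < 2 ^ L) :
    ts (2 ^ n) (v * 2 ^ L + w) = ts (2 ^ n) (v' * 2 ^ L + w) := by
  rcases le_or_gt (n + 2) L with hL | hL
  · -- long suffix
    set M := L - n with hM
    have hM2 : 2 ≤ M := by omega
    have hLn : L = n + M := by omega
    set u := w / 2 ^ n with hu
    have hult : u < 2 ^ M := by
      rw [hu]
      apply Nat.div_lt_of_lt_mul
      rw [← pow_add, ← hLn]; exact hw
    have hsplit : ∀ x : ℕ, x * 2 ^ L + w = (x * 2 ^ M) * 2 ^ n + w := by
      intro x; rw [hLn, pow_add]; ring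
    have hdm : ∀ x : ℕ, (x * 2 ^ L + w) / 2 ^ n = x * 2 ^ M + u ∧
        (x * 2 ^ L + w) % 2 ^ n = w % 2 ^ n := by
      intro x
      constructor
      · rw [hsplit x, add_comm, Nat.add_mul_div_right _ _ (by positivity : 0 < 2 ^ n), hu]
        omega
      · rw [hsplit x, add_comm, Nat.add_mul_mod_self_right]
    obtain ⟨hd1, hm1⟩ := hdm v
    obtain ⟨hd2, hm2⟩ := hdm v'
    have hSv : S (v * 2 ^ M + u) = (S u + (u + 1) * t v) % 2 := S_high M v u hM2 hult
    have hSv' : S (v' * 2 ^ M + u) = (S u + (u + 1) * t v') % 2 := S_high M v' u hM2 hult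
    rw [ts_formula, ts_formula, hd1, hd2, hm1, hm2, hSv, hSv', ht]
    have hev : ∀ x : ℕ, (x * 2 ^ M) % 2 = 0 := by
      intro x
      have : x * 2 ^ M = (x * 2 ^ (M - 1)) * 2 := by
        rw [pow_two_split M (by omega)]; ring
      omega
    have h1 := hev v; have h2 := hev v'
    have h01 : t (w % 2 ^ n) = 0 ∨ t (w % 2 ^ n) = 1 := by have := t_lt_two (w % 2 ^ n); omega
    rcases h01 with h | h <;> rw [h] <;> omega
  · -- short suffix
    have hke : (v * 2 ^ L + w) % 2 ^ (n + 2) = (v' * 2 ^ L + w) % 2 ^ (n + 2) :=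
      ((Nat.ModEq.mul_right (2 ^ L) hmod).add_right w)
    set k := v * 2 ^ L + w with hk
    set k' := v' * 2 ^ L + w with hk'
    have hpow : (2 : ℕ) ^ (n + 2) = 2 ^ n * 4 := by rw [pow_add]; ring
    have hQ4 : k / 2 ^ n % 4 = k' / 2 ^ n % 4 := by
      rw [← Nat.mod_mul_right_div_self, ← Nat.mod_mul_right_div_self, ← hpow, hke]
    have hR : k % 2 ^ n = k' % 2 ^ n := by
      have hdvd : (2 : ℕ) ^ n ∣ 2 ^ (n + 2) := pow_dvd_pow 2 (by omega)
      rw [← Nat.mod_mod_of_dvd k hdvd, ← Nat.mod_mod_of_dvd k' hdvd, hke]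
    have htk : t k = t k' := by
      rw [hk, hk', t_add L v w hw, t_add L v' w hw, ht]
    have htQ : t (k / 2 ^ n) = t (k' / 2 ^ n) := by
      have e1 := t_split k n
      have e2 := t_split k' n
      rw [hR] at e1
      have := t_lt_two (k / 2 ^ n); have := t_lt_two (k' / 2 ^ n)
      have := t_lt_two (k' % 2 ^ n)
      omega
    have hSQ := S_eq_of _ _ hQ4 htQ
    rw [ts_formula, ts_formula, hR, hSQ]
    have h01 : t (k' % 2 ^ n) = 0 ∨ t (k' % 2 ^ n) = 1 := by have := t_lt_two (k' % 2 ^ n); omega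
    rcases h01 with h | h <;> rw [h] <;> omega

lemma key0 (n v : ℕ) : ts (2 ^ n) (v * 2 ^ (n + 1)) = (v + t v) % 2 := by
  have hk : v * 2 ^ (n + 1) = (2 * v) * 2 ^ n + 0 := by rw [pow_add]; ring
  obtain ⟨hd, hm⟩ := div_mod_helper (2 ^ n) (2 * v) 0 (by positivity) (by positivity)
  rw [ts_formula, hk, hd, hm, t_zero, S_even]
  omega

lemma key_bit (n j v v' : ℕ) (hj : j ≤ n + 1) (hlow : v % 2 ^ j = v' % 2 ^ j) (ht : t v = t v')
    (hts : ts (2 ^ n) (v * 2 ^ (n + 1 - j)) = ts (2 ^ n) (v' * 2 ^ (n + 1 - j))) :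
    v / 2 ^ j % 2 = v' / 2 ^ j % 2 := by
  cases j with
  | zero =>
    simp only [pow_zero, Nat.div_one]
    rw [show n + 1 - 0 = n + 1 by omega] at hts
    rw [key0, key0] at hts
    omega
  | succ i =>
    have hi : i ≤ n := by omega
    have hL : n + 1 - (i + 1) = n - i := by omega
    rw [hL] at hts
    -- compute ts (2^n) (x * 2^(n-i)) for x = v, v'
    have hform : ∀ x : ℕ, ts (2 ^ n) (x * 2 ^ (n - i))
        = (S (x / 2 ^ i) + (x / 2 ^ i + 1) * t (x % 2 ^ i)) % 2 := by
      intro x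
      have hx : x * 2 ^ (n - i) = (x / 2 ^ i) * 2 ^ n + (x % 2 ^ i) * 2 ^ (n - i) := by
        conv_lhs => rw [← Nat.div_add_mod' x (2 ^ i)]
        rw [show (2:ℕ) ^ n = 2 ^ i * 2 ^ (n - i) by rw [← pow_add]; congr 1; omega]
        ring
      have hRlt : (x % 2 ^ i) * 2 ^ (n - i) < 2 ^ n := by
        rw [show (2:ℕ) ^ n = 2 ^ i * 2 ^ (n - i) by rw [← pow_add]; congr 1; omega]
        exact mul_lt_mul_of_pos_right (Nat.mod_lt _ (by positivity)) (by positivity)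
      obtain ⟨hd, hm⟩ := div_mod_helper (2 ^ n) (x / 2 ^ i) ((x % 2 ^ i) * 2 ^ (n - i))
        (by positivity) hRlt
      rw [ts_formula, hx, hd, hm, t_mul_pow]
    rw [hform v, hform v'] at hts
    -- shared quantities
    have hpow : (2:ℕ) ^ (i + 1) = 2 ^ i * 2 := by rw [pow_succ]
    have hb : v / 2 ^ i % 2 = v' / 2 ^ i % 2 := by
      rw [← Nat.mod_mul_right_div_self, ← Nat.mod_mul_right_div_self, ← hpow, hlow]
    have hm2 : v % 2 ^ i = v' % 2 ^ i := by
      have hdvd : (2:ℕ) ^ i ∣ 2 ^ (i + 1) := pow_dvd_pow 2 (by omega)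
      rw [← Nat.mod_mod_of_dvd v hdvd, ← Nat.mod_mod_of_dvd v' hdvd, hlow]
    have hτ : t (v / 2 ^ i) = t (v' / 2 ^ i) := by
      have e1 := t_split v i
      have e2 := t_split v' i
      rw [hm2] at e1
      have := t_lt_two (v / 2 ^ i); have := t_lt_two (v' / 2 ^ i)
      have := t_lt_two (v' % 2 ^ i)
      omega
    have hdd : ∀ x : ℕ, x / 2 ^ (i + 1) = x / 2 ^ i / 2 := by
      intro x; rw [hpow, Nat.div_div_eq_div_mul]
    rw [hdd v, hdd v']
    rw [hm2] at hts
    have h01 : t (v' % 2 ^ i) = 0 ∨ t (v' % 2 ^ i) = 1 := by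
      have := t_lt_two (v' % 2 ^ i); omega
    by_cases hbv : v / 2 ^ i % 2 = 0
    · have hbv' : v' / 2 ^ i % 2 = 0 := by omega
      have e1 : v / 2 ^ i = 2 * (v / 2 ^ i / 2) := by omega
      have e2 : v' / 2 ^ i = 2 * (v' / 2 ^ i / 2) := by omega
      rw [e1, e2, S_even, S_even] at hts
      have f1 : t (2 * (v / 2 ^ i / 2)) = t (v / 2 ^ i / 2) := t_two_mul _
      have f2 : t (2 * (v' / 2 ^ i / 2)) = t (v' / 2 ^ i / 2) := t_two_mul _
      rw [← e1] at f1
      rw [← e2] at f2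
      rw [hτ] at f1
      have := t_lt_two (v' / 2 ^ i)
      have := t_lt_two (v / 2 ^ i / 2)
      have := t_lt_two (v' / 2 ^ i / 2)
      rcases h01 with h | h <;> rw [h] at hts <;> omega
    · have hbv' : ¬ (v' / 2 ^ i % 2 = 0) := by omega
      have e1 : v / 2 ^ i = 2 * (v / 2 ^ i / 2) + 1 := by omega
      have e2 : v' / 2 ^ i = 2 * (v' / 2 ^ i / 2) + 1 := by omega
      rw [e1, e2, S_odd, S_odd] at hts
      rcases h01 with h | h <;> rw [h] at hts <;> omega

end ThueMorseAux

lemma foldl_val (z : List Bool) : ∀ a : ℕ,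
    z.foldl (fun a b => 2 * a + (if b then 1 else 0)) a = a * 2 ^ z.length + val z := by
  induction z with
  | nil => intro a; simp [val]
  | cons b z ih =>
    intro a
    show z.foldl _ (2 * a + (if b then 1 else 0)) = _
    rw [ih (2 * a + (if b then 1 else 0))]
    have hv : val (b :: z) = (if b then 1 else 0) * 2 ^ z.length + val z := by
      show z.foldl _ (2 * 0 + (if b then 1 else 0)) = _
      rw [ih (2 * 0 + (if b then 1 else 0))]
      ring_nf
    rw [hv, List.length_cons, pow_succ]
    ring

lemma val_append (x z : List Bool) : val (x ++ z) = val x * 2 ^ z.length + val z := by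
  rw [val, List.foldl_append, ← val, foldl_val]

lemma val_lt (z : List Bool) : val z < 2 ^ z.length := by
  induction z with
  | nil => simp [val]
  | cons b z ih =>
    have : val (b :: z) = (if b then 1 else 0) * 2 ^ z.length + val z := by
      show z.foldl _ (2 * 0 + (if b then 1 else 0)) = _
      rw [foldl_val]; ring_nf
    rw [this, List.length_cons, pow_succ]
    by_cases hb : b <;> simp [hb] <;> omega

lemma val_replicate_false (n : ℕ) : val (List.replicate n false) = 0 := by
  induction n with
  | zero => simp [val]
  | succ n ih =>
    rw [List.replicate_succ]
    show (List.replicate n false).foldl _ (2 * 0 + (if false then 1 else 0)) = 0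
    simpa [val] using ih

def enc (v : ℕ) : List Bool :=
  if h : v = 0 then [] else enc (v / 2) ++ [decide (v % 2 = 1)]
decreasing_by exact Nat.div_lt_self (Nat.pos_of_ne_zero h) (by norm_num)

lemma val_enc (v : ℕ) : val (enc v) = v := by
  induction v using Nat.strong_induction_on with
  | _ v ih =>
    rw [enc]
    by_cases h : v = 0
    · simp [h, val]
    · rw [dif_neg h, val_append, ih (v / 2) (Nat.div_lt_self (Nat.pos_of_ne_zero h) (by norm_num))]
      have hb : val [decide (v % 2 = 1)] = v % 2 := by
        by_cases h2 : v % 2 = 1 <;> simp [h2, val] <;> omega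
      rw [hb, List.length_singleton, pow_one]
      omega

/-- The minimal DFAO computing `ts (2^n)` (msd-first, base 2) has exactly `2^(n+3)`
states, i.e., the Myhill–Nerode congruence has exactly `2^(n+3)` classes. -/

theorem tm_min_states (n : ℕ) :
    Nat.card (Quot (mnRel n)) = 2 ^ (n + 3) := by
  classical
  haveI : NeZero (2 ^ (n + 2)) := ⟨by positivity⟩
  -- the invariant
  set g : List Bool → ZMod (2 ^ (n + 2)) × ZMod 2 :=
    fun x => ((val x : ZMod (2 ^ (n + 2))), ((t (val x) : ℕ) : ZMod 2)) with hg
  -- membership unfolding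
  have hmem : ∀ x z : List Bool, (x ++ z ∈ L n ↔ ts (2 ^ n) (val x * 2 ^ z.length + val z) = 1) := by
    intro x z
    rw [L, Set.mem_setOf_eq, val_append]
  -- soundness of the invariant
  have hsound : ∀ x y, mnRel n x y → g x = g y := by
    intro x y hxy
    have hts : ∀ M : ℕ, ts (2 ^ n) (val x * 2 ^ M) = ts (2 ^ n) (val y * 2 ^ M) := by
      intro M
      have h := hxy (List.replicate M false)
      rw [hmem, hmem, val_replicate_false, List.length_replicate, Nat.add_zero, Nat.add_zero] at h
      have h1 := ts_lt_two (2 ^ n) (val x * 2 ^ M)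
      have h2 := ts_lt_two (2 ^ n) (val y * 2 ^ M)
      omega
    have ht : t (val x) = t (val y) := by
      have := hts (n + 2)
      rwa [ts_top, ts_top] at this
    have hmod : ∀ j : ℕ, j ≤ n + 2 → val x % 2 ^ j = val y % 2 ^ j := by
      intro j
      induction j with
      | zero => intro _; simp [Nat.mod_one]
      | succ j ihj =>
        intro hj
        have hlow := ihj (by omega)
        have hbit := key_bit n j (val x) (val y) (by omega) hlow ht (hts (n + 1 - j))
        have e1 : val x % 2 ^ (j + 1) = val x % 2 ^ j + 2 ^ j * (val x / 2 ^ j % 2) := by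
          rw [pow_succ]; exact Nat.mod_mul
        have e2 : val y % 2 ^ (j + 1) = val y % 2 ^ j + 2 ^ j * (val y / 2 ^ j % 2) := by
          rw [pow_succ]; exact Nat.mod_mul
        rw [hbit] at e1
        omega
    have hm := hmod (n + 2) (le_refl _)
    rw [hg]
    refine Prod.ext ?_ ?_
    · exact (ZMod.natCast_eq_natCast_iff _ _ _).mpr hm
    · simp only [ht]
  -- the induced map
  set f : Quot (mnRel n) → ZMod (2 ^ (n + 2)) × ZMod 2 := Quot.lift g hsound with hf
  have hbij : Function.Bijective f := by
    constructor
    · intro q q' hgxy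
      obtain ⟨x, rfl⟩ := Quot.exists_rep q
      obtain ⟨y, rfl⟩ := Quot.exists_rep q'
      apply Quot.sound
      have hxy2 : g x = g y := hgxy
      rw [hg] at hxy2
      simp only [Prod.mk.injEq] at hxy2
      obtain ⟨h1, h2⟩ := hxy2
      have hmod : val x % 2 ^ (n + 2) = val y % 2 ^ (n + 2) :=
        (ZMod.natCast_eq_natCast_iff _ _ _).mp h1
      have ht : t (val x) = t (val y) :=
        nat_eq_of_cast2 _ _ (t_lt_two _) (t_lt_two _) h2
      intro z
      rw [hmem, hmem, ts_ext n (val x) (val y) hmod ht z.length (val z) (val_lt z)]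
    · rintro ⟨a, p⟩
      have hwlt : a.val < 2 ^ (n + 2) := ZMod.val_lt a
      by_cases hc : ((t a.val : ℕ) : ZMod 2) = p
      · refine ⟨Quot.mk _ (enc a.val), ?_⟩
        show g (enc a.val) = (a, p)
        rw [hg]
        simp only [val_enc]
        rw [hc, ZMod.natCast_val, ZMod.cast_id]
      · refine ⟨Quot.mk _ (enc (2 ^ (n + 2) + a.val)), ?_⟩
        show g (enc (2 ^ (n + 2) + a.val)) = (a, p)
        rw [hg]
        simp only [val_enc]
        have htN : t (2 ^ (n + 2) + a.val) = (1 + t a.val) % 2 := by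
          rw [show 2 ^ (n + 2) + a.val = 1 * 2 ^ (n + 2) + a.val by ring,
            t_add (n + 2) 1 a.val hwlt, t_one]
        refine Prod.ext ?_ ?_
        · show ((2 ^ (n + 2) + a.val : ℕ) : ZMod (2 ^ (n + 2))) = a
          rw [Nat.cast_add, ZMod.natCast_self, ZMod.natCast_val, ZMod.cast_id, zero_add]
        · show ((t (2 ^ (n + 2) + a.val) : ℕ) : ZMod 2) = p
          rw [htN, ZMod.natCast_mod]
          push_cast
          have h2 : ∀ q r : ZMod 2, q ≠ r → 1 + q = r := by decide
          exact h2 _ _ hc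
  calc Nat.card (Quot (mnRel n)) = Nat.card (ZMod (2 ^ (n + 2)) × ZMod 2) :=
        Nat.card_congr (Equiv.ofBijective f hbij)
    _ = 2 ^ (n + 2) * 2 := by rw [Nat.card_prod, Nat.card_zmod, Nat.card_zmod]
    _ = 2 ^ (n + 3) := by ring
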